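/- In the Diamond Principle bijection for a Mayer–Vietoris diamond at index j, the creator and destroyer of corresponding intervals swap roles only in the case where the interval [j,j] of the upper filtration (created by the addition of σ and destroyed by the deletion of τ) maps to the interval [j,j] of the lower filtration in one dimension lower (created by the deletion of τ and destroyed by the addition of σ); in all other cases of the bijection, the creator maps to the creator and the destroyer to the destroyer. -/
import Mathlib


/-- The interval mapping of the Diamond Principle at index `j`:
`[b,j-1] ↦ [b,j]`, `[b,j] ↦ [b,j-1]`, `[j,d] ↦ [j+1,d]`, `[j+1,d] ↦ [j,d]`,
and all other intervals are fixed. -/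
def fDiamond (j : ℕ) (x : ℕ × ℕ) : ℕ × ℕ :=
  if x.2 = j - 1 then (x.1, j)
  else if x.2 = j then (x.1, j - 1)
  else if x.1 = j then (j + 1, x.2)
  else if x.1 = j + 1 then (j, x.2)
  else x
/-- In the Diamond Principle bijection for a Mayer–Vietoris diamond at
index `j` (upper filtration with events `w` adds `σ` at step `j-1` and deletes `τ` at step
`j`; lower filtration with events `w'` deletes `τ` then adds `σ`), the creator and
destroyer of corresponding intervals swap roles only for the interval `[j,j]`; for every
other interval the creator maps to the creator and the destroyer to the destroyer. -/
theorem diamond_creator_destroyer {C : Type} (m j : ℕ) (hj : 1 ≤ j) (hjm : j < m)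
    (σ τ : C) (hστ : σ ≠ τ) (w w' : ℕ → Bool × C)
    (h1 : w (j - 1) = (true, σ)) (h2 : w j = (false, τ))
    (h1' : w' (j - 1) = (false, τ)) (h2' : w' j = (true, σ))
    (hother : ∀ i, i ≠ j - 1 → i ≠ j → w' i = w i) :
    (∀ b d, 1 ≤ b → b ≤ d → d < m → (b, d) ≠ (j, j) →
      w' ((fDiamond j (b, d)).1 - 1) = w (b - 1) ∧
      w' ((fDiamond j (b, d)).2) = w d) ∧
    (w' (j - 1) = w j ∧ w' j = w (j - 1)) := by
  refine ⟨?_, by rw [h1', h2, h2', h1]; exact ⟨rfl, rfl⟩⟩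
  intro b d hb hbd hdm hne
  have hne' : b ≠ j ∨ d ≠ j := by
    by_contra h; push_neg at h; exact hne (by rw [h.1, h.2])
  simp only [fDiamond]
  split_ifs with hd1 hd2 hb1 hb2 <;> simp only
  · -- d = j - 1
    refine ⟨hother (b-1) (by omega) (by omega), ?_⟩
    rw [hd1, h2', h1]
  · -- d = j
    have hbj : b ≠ j := by rcases hne' with h | h; exact h; exact absurd hd2 h
    refine ⟨hother (b-1) (by omega) (by omega), ?_⟩
    rw [hd2, h1', h2]
  · -- b = j
    refine ⟨?_, hother d hd1 hd2⟩
    simp only [Nat.add_sub_cancel]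
    rw [hb1, h2', h1]
  · -- b = j + 1
    refine ⟨?_, hother d hd1 hd2⟩
    rw [hb2, h1', Nat.add_sub_cancel, h2]
  · exact ⟨hother (b-1) (by omega) (by omega), hother d hd1 hd2⟩
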